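/- Suppose C' ∈ (0,1), the receiver beliefs satisfy π^r(θ₀^s|θ₀^r)·|Δu^r₁₀(θ₀^s)| > π^r(θ₁^s|θ₀^r)·Δu^r₁₀(θ₁^s) and π^r(θ₁^s|θ₁^r)·Δu^r₁₀(θ₁^s) > π^r(θ₀^s|θ₁^r)·|Δu^r₁₀(θ₀^s)| (the prior preference assumptions), and π^r(θ₀^s|θ₁^r) < π^r(θ₀^s|θ₀^r). Then there exists a sender mixed strategy σ^s* with σ^s*(m₀|θ₀^s), σ^s*(m₀|θ₁^s) ∈ (0,1) satisfying simultaneously γ^r(σ^s*, m₁, θ₀^r) = 0 and γ^r(σ^s*, m₀, θ₁^r) = 0; moreover this σ^s* automatically satisfies γ^r(σ^s*,m₀,θ₀^r) < 0 and γ^r(σ^s*,m₁,θ₁^r) > 0. -/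

import Mathlib

/-- existence of the sender part of the belief-independent
partially-separating PBE: a strategy x = σ^s*(m₀|θ₀^s), y = σ^s*(m₀|θ₁^s) in
(0,1)² with γ^r(σ^s*,m₁,θ₀^r) = 0 and γ^r(σ^s*,m₀,θ₁^r) = 0, which moreover
satisfies γ^r(σ^s*,m₀,θ₀^r) < 0 and γ^r(σ^s*,m₁,θ₁^r) > 0.
`pij = π^r(θᵢ^s|θⱼ^r)`, `Δ0 = Δu^r₁₀(θ₀^s) < 0 < Δ1 = Δu^r₁₀(θ₁^s)`. -/
theorem stmt_9
    (p00 p10 p01 p11 Δ0 Δ1 C' : ℝ)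
    (hΔ0 : Δ0 < 0) (hΔ1 : 0 < Δ1)
    (hC'0 : 0 < C') (hC'1 : C' < 1)
    (hp00 : 0 < p00) (hp10 : 0 < p10) (hp0 : p00 + p10 = 1)
    (hp01 : 0 < p01) (hp11 : 0 < p11) (hp1 : p01 + p11 = 1)
    -- prior preferences: θ₀^r prefers a₀, θ₁^r prefers a₁
    (hpref0 : p00 * (-Δ0) > p10 * Δ1)
    (hpref1 : p11 * Δ1 > p01 * (-Δ0))
    -- belief ordering π^r(θ₀^s|θ₁^r) < π^r(θ₀^s|θ₀^r)
    (hord : p01 < p00) :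
    ∃ x y : ℝ, 0 < x ∧ x < 1 ∧ 0 < y ∧ y < 1
      ∧ (1 - x) * p00 * Δ0 + (1 - y) * p10 * Δ1 = 0
      ∧ x * p01 * Δ0 + y * p11 * Δ1 = 0
      ∧ x * p00 * Δ0 + y * p10 * Δ1 < 0
      ∧ (1 - x) * p01 * Δ0 + (1 - y) * p11 * Δ1 > 0 := by
  have e10 : p10 = 1 - p00 := by linarith
  have e11 : p11 = 1 - p01 := by linarith
  subst e10 e11
  have hd : 0 < p00 - p01 := by linarith
  have hS : p00 * Δ0 + (1 - p00) * Δ1 < 0 := by nlinarith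
  have hT : 0 < p01 * Δ0 + (1 - p01) * Δ1 := by nlinarith
  have hden1 : Δ0 * (p00 - p01) < 0 := mul_neg_of_neg_of_pos hΔ0 hd
  have hden1' : Δ0 * (p00 - p01) ≠ 0 := ne_of_lt hden1
  have hden2 : 0 < Δ1 * (p00 - p01) := mul_pos hΔ1 hd
  have hden2' : Δ1 * (p00 - p01) ≠ 0 := ne_of_gt hden2
  refine ⟨(p00 * Δ0 + (1 - p00) * Δ1) * (1 - p01) / (Δ0 * (p00 - p01)),
          -((p00 * Δ0 + (1 - p00) * Δ1) * p01) / (Δ1 * (p00 - p01)), ?_, ?_, ?_, ?_, ?_, ?_, ?_, ?_⟩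
  · exact div_pos_of_neg_of_neg (by nlinarith) hden1
  · rw [div_lt_one_of_neg hden1]
    nlinarith [mul_pos hp10 hT]
  · apply div_pos (by nlinarith) hden2
  · rw [div_lt_one hden2]
    nlinarith [mul_pos hp00 hT]
  · field_simp [hΔ0.ne, hΔ1.ne', hd.ne']
    ring
  · field_simp [hΔ0.ne, hΔ1.ne', hd.ne']
    ring
  · have h1 : (p00 * Δ0 + (1 - p00) * Δ1) * (1 - p01) / (Δ0 * (p00 - p01)) * p00 * Δ0 +
        -((p00 * Δ0 + (1 - p00) * Δ1) * p01) / (Δ1 * (p00 - p01)) * (1 - p00) * Δ1 =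
        p00 * Δ0 + (1 - p00) * Δ1 := by
      field_simp [hΔ0.ne, hΔ1.ne', hd.ne']
      ring
    rw [h1]; exact hS
  · have h2 : (1 - (p00 * Δ0 + (1 - p00) * Δ1) * (1 - p01) / (Δ0 * (p00 - p01))) * p01 * Δ0 +
        (1 - -((p00 * Δ0 + (1 - p00) * Δ1) * p01) / (Δ1 * (p00 - p01))) * (1 - p01) * Δ1 =
        p01 * Δ0 + (1 - p01) * Δ1 := by
      field_simp [hΔ0.ne, hΔ1.ne', hd.ne']
      ring
    rw [h2]; exact hT
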